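/- arXiv:2509.21053 — 2 statements merged into one kernel-verified Lean document; each statement's English description precedes it below -/
import Mathlib

section
/- For every γ ∈ (0,2), setting Q = 2/γ + γ/2, and for every z ∈ ℂ with 0 < Re(z) < Q, the function t ↦ ( (Q/2 − z)² e^{−t} − sinh((Q/2 − z)t/2)² / ( sinh(tγ/4) · sinh(t/γ) ) ) / t is absolutely integrable on (0,∞); moreover the resulting function F_γ(z) := ∫₀^∞ ( (Q/2 − z)² e^{−t} − sinh((Q/2 − z)t/2)² / ( sinh(tγ/4) · sinh(t/γ) ) ) dt/t is holomorphic on the strip {z ∈ ℂ : 0 < Re(z) < Q}. -/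
set_option maxHeartbeats 1000000

open MeasureTheory Complex

/-- The integrand in the definition of `log Υ_{γ/2}`. -/
noncomputable def dozzIntegrand (γ Q : ℝ) (z : ℂ) (t : ℝ) : ℂ :=
  (((Q : ℂ) / 2 - z) ^ 2 * Complex.exp (-(t : ℂ))
      - Complex.sinh (((Q : ℂ) / 2 - z) * (t : ℂ) / 2) ^ 2
        / (Complex.sinh ((t : ℂ) * (γ : ℂ) / 4) * Complex.sinh ((t : ℂ) / (γ : ℂ)))) / (t : ℂ)

/-- `F_γ = log Υ_{γ/2}` on the strip `0 < Re z < Q`. -/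
noncomputable def Fg (γ Q : ℝ) (z : ℂ) : ℂ :=
  ∫ t in Set.Ioi (0 : ℝ), dozzIntegrand γ Q z t

section Aux


lemma expCubic (w : ℂ) :
    ‖Complex.exp w - (1 + w + w ^ 2 / 2)‖ ≤ ‖w‖ ^ 3 * (Real.exp ‖w‖ + 3) := by
  have hE : (0:ℝ) < Real.exp ‖w‖ := Real.exp_pos _
  rcases le_or_gt ‖w‖ 2 with h | h
  · have hx : ‖w‖ / (Nat.succ 3 : ℕ) ≤ 1 / 2 := by
      push_cast; linarith
    have hb := Complex.exp_bound' (n := 3) hx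
    have hsum : (∑ m ∈ Finset.range 3, w ^ m / m.factorial) = 1 + w + w ^ 2 / 2 := by
      rw [Finset.sum_range_succ, Finset.sum_range_succ, Finset.sum_range_succ,
        Finset.sum_range_zero]
      norm_num [Nat.factorial]
    rw [hsum] at hb
    have h3 : (Nat.factorial 3 : ℝ) = 6 := by norm_num [Nat.factorial]
    rw [h3] at hb
    nlinarith [pow_nonneg (norm_nonneg w) 3]
  · have h1 : ‖Complex.exp w - (1 + w + w ^ 2 / 2)‖ ≤
        Real.exp ‖w‖ + (1 + ‖w‖ + ‖w‖ ^ 2 / 2) := by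
      refine (norm_sub_le _ _).trans ?_
      gcongr
      · rw [Complex.norm_exp]
        exact Real.exp_le_exp.2 (Complex.re_le_norm w)
      · refine (norm_add_le _ _).trans ?_
        have h2 : ‖w ^ 2 / 2‖ = ‖w‖ ^ 2 / 2 := by
          rw [norm_div, norm_pow]; norm_num
        rw [h2]
        gcongr
        refine (norm_add_le _ _).trans ?_
        norm_num
    refine h1.trans ?_
    have h8 : (8:ℝ) < ‖w‖ ^ 3 := by nlinarith
    have e1 : Real.exp ‖w‖ ≤ ‖w‖ ^ 3 * Real.exp ‖w‖ := by nlinarith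
    have e2 : 1 + ‖w‖ + ‖w‖ ^ 2 / 2 ≤ 3 * ‖w‖ ^ 3 := by nlinarith
    linarith

lemma sinhCubic (w : ℂ) :
    ‖Complex.sinh w - w‖ ≤ ‖w‖ ^ 3 * (Real.exp ‖w‖ + 3) := by
  have key : Complex.sinh w - w =
      ((Complex.exp w - (1 + w + w ^ 2 / 2)) - (Complex.exp (-w) - (1 + -w + (-w) ^ 2 / 2))) / 2 := by
    rw [Complex.sinh]; ring
  rw [key]
  have b1 := expCubic w
  have b2 := expCubic (-w)
  rw [norm_neg] at b2
  rw [norm_div]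
  refine (div_le_div_of_nonneg_right (norm_sub_le _ _) (by norm_num)).trans ?_
  simp only [Complex.norm_ofNat] at *
  linarith

lemma abs_sinh_le (w : ℂ) : ‖Complex.sinh w‖ ≤ Real.exp |w.re| := by
  rw [Complex.sinh, norm_div]
  have : ‖Complex.exp w - Complex.exp (-w)‖ ≤ Real.exp |w.re| + Real.exp |w.re| := by
    refine (norm_sub_le _ _).trans ?_
    rw [Complex.norm_exp, Complex.norm_exp]
    gcongr <;> simp [le_abs_self, neg_le_abs, neg_abs_le]
  simp only [Complex.norm_ofNat]
  linarith

lemma sinh_eq_exp (x : ℝ) : Real.sinh x = Real.exp x * (1 - Real.exp (-(2*x))) / 2 := by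
  rw [Real.sinh_eq, show -x = x + -(2*x) by ring, Real.exp_add]; ring

lemma sinhCubicReal (x : ℝ) : |Real.sinh x - x| ≤ |x| ^ 3 * (Real.exp |x| + 3) := by
  have h := sinhCubic (x : ℂ)
  simp only [← Complex.ofReal_sinh, ← Complex.ofReal_sub, Complex.norm_real,
    Real.norm_eq_abs] at h
  exact h

lemma sinh_le_exp {x : ℝ} (hx : 0 ≤ x) : Real.sinh x ≤ Real.exp x := by
  rw [Real.sinh_eq]
  have := Real.exp_pos (-x)
  have := Real.exp_pos x
  linarith

noncomputable def Dr (γ t : ℝ) : ℝ := Real.sinh (t * γ / 4) * Real.sinh (t / γ)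

noncomputable def Cg (γ : ℝ) : ℝ :=
  (γ/4)^3 * (Real.exp (γ/4) + 3) * Real.exp (1/γ) + (γ/4) * (1/γ)^3 * (Real.exp (1/γ) + 3)

noncomputable def cg (γ : ℝ) : ℝ := (1 - Real.exp (-(γ/2))) * (1 - Real.exp (-(2/γ))) / 4

lemma Cg_nonneg {γ : ℝ} (hγ : 0 < γ) : 0 ≤ Cg γ := by unfold Cg; positivity

lemma cg_pos {γ : ℝ} (hγ : 0 < γ) : 0 < cg γ := by
  unfold cg
  have h1 : Real.exp (-(γ/2)) < 1 := by rw [Real.exp_lt_one_iff]; linarith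
  have h2 : Real.exp (-(2/γ)) < 1 := by
    rw [Real.exp_lt_one_iff]
    have : 0 < 2/γ := by positivity
    linarith
  nlinarith

lemma Dr_lower {γ t : ℝ} (hγ : 0 < γ) (ht : 0 ≤ t) : t^2/4 ≤ Dr γ t := by
  unfold Dr
  have hu : 0 ≤ t * γ / 4 := by positivity
  have hv : 0 ≤ t / γ := by positivity
  have h1 : t * γ / 4 ≤ Real.sinh (t * γ / 4) := Real.self_le_sinh_iff.2 hu
  have h2 : t / γ ≤ Real.sinh (t / γ) := Real.self_le_sinh_iff.2 hv
  calc t^2/4 = (t * γ / 4) * (t / γ) := by field_simp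
    _ ≤ Real.sinh (t * γ / 4) * Real.sinh (t / γ) :=
        mul_le_mul h1 h2 hv (le_trans hu h1)

lemma Dr_pos {γ t : ℝ} (hγ : 0 < γ) (ht : 0 < t) : 0 < Dr γ t :=
  lt_of_lt_of_le (by positivity) (Dr_lower hγ ht.le)

lemma Dr_sub {γ t : ℝ} (hγ : 0 < γ) (ht : 0 ≤ t) (ht1 : t ≤ 1) :
    |Dr γ t - t^2/4| ≤ Cg γ * t^3 := by
  set u := t * γ / 4 with hu_def
  set v := t / γ with hv_def
  have hu : 0 ≤ u := by positivity
  have hv : 0 ≤ v := by positivity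
  have huB : u ≤ γ/4 := by rw [hu_def]; nlinarith
  have hvB : v ≤ 1/γ := by rw [hv_def, div_le_div_iff₀ hγ hγ]; nlinarith
  have key : Dr γ t - t^2/4 = (Real.sinh u - u) * Real.sinh v + u * (Real.sinh v - v) := by
    unfold Dr
    rw [hu_def, hv_def]
    field_simp
    ring
  have b1 : |Real.sinh u - u| ≤ u^3 * (Real.exp (γ/4) + 3) := by
    refine (sinhCubicReal u).trans ?_
    rw [_root_.abs_of_nonneg hu]
    gcongr
  have b2 : |Real.sinh v - v| ≤ v^3 * (Real.exp (1/γ) + 3) := by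
    refine (sinhCubicReal v).trans ?_
    rw [_root_.abs_of_nonneg hv]
    gcongr
  have b3 : Real.sinh v ≤ Real.exp (1/γ) := (sinh_le_exp hv).trans (Real.exp_le_exp.2 hvB)
  have hsv : 0 ≤ Real.sinh v := hv.trans (Real.self_le_sinh_iff.2 hv)
  have hu3 : u^3 ≤ (γ/4)^3 * t^3 := by
    rw [hu_def]
    calc (t * γ / 4)^3 = (γ/4)^3 * t^3 := by ring
      _ ≤ (γ/4)^3 * t^3 := le_refl _
  have hv3 : v^3 ≤ (1/γ)^3 * t^2 := by
    rw [hv_def]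
    have h33 : t^3 ≤ t^2 := by nlinarith
    calc (t/γ)^3 = t^3 * (1/γ)^3 := by ring
      _ ≤ t^2 * (1/γ)^3 := by gcongr
      _ = (1/γ)^3 * t^2 := by ring
  have hb1' : |Real.sinh u - u| ≤ (γ/4)^3 * t^3 * (Real.exp (γ/4) + 3) :=
    b1.trans (mul_le_mul_of_nonneg_right hu3 (by positivity))
  have hb2' : |Real.sinh v - v| ≤ (1/γ)^3 * t^2 * (Real.exp (1/γ) + 3) :=
    b2.trans (mul_le_mul_of_nonneg_right hv3 (by positivity))
  rw [key]
  calc |(Real.sinh u - u) * Real.sinh v + u * (Real.sinh v - v)|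
      ≤ |Real.sinh u - u| * Real.sinh v + u * |Real.sinh v - v| := by
        refine (abs_add_le _ _).trans ?_
        rw [abs_mul, abs_mul, _root_.abs_of_nonneg hsv, _root_.abs_of_nonneg hu]
    _ ≤ ((γ/4)^3 * t^3 * (Real.exp (γ/4) + 3)) * Real.exp (1/γ)
        + u * ((1/γ)^3 * t^2 * (Real.exp (1/γ) + 3)) := by
        gcongr ?_ + ?_
        · exact mul_le_mul hb1' b3 hsv (by positivity)
        · exact mul_le_mul_of_nonneg_left hb2' hu
    _ = Cg γ * t^3 := by rw [hu_def]; unfold Cg; ring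

lemma Dr_lower_exp {γ t Q : ℝ} (hγ : 0 < γ) (hQ : Q = 2/γ + γ/2) (ht : 1 ≤ t) :
    cg γ * Real.exp (Q/2 * t) ≤ Dr γ t := by
  have ht0 : 0 < t := lt_of_lt_of_le one_pos ht
  unfold Dr
  rw [sinh_eq_exp, sinh_eq_exp]
  have hsum : Real.exp (t*γ/4) * Real.exp (t/γ) = Real.exp (Q/2 * t) := by
    rw [← Real.exp_add, hQ]
    congr 1
    field_simp
    ring
  have h1 : 1 - Real.exp (-(γ/2)) ≤ 1 - Real.exp (-(2*(t*γ/4))) := by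
    have : Real.exp (-(2*(t*γ/4))) ≤ Real.exp (-(γ/2)) := by
      apply Real.exp_le_exp.2; nlinarith
    linarith
  have h2 : 1 - Real.exp (-(2/γ)) ≤ 1 - Real.exp (-(2*(t/γ))) := by
    have : Real.exp (-(2*(t/γ))) ≤ Real.exp (-(2/γ)) := by
      apply Real.exp_le_exp.2
      rw [neg_le_neg_iff, show 2*(t/γ) = 2*t/γ by ring]
      gcongr
      linarith
    linarith
  have e1 : (0:ℝ) < 1 - Real.exp (-(γ/2)) := by
    have : Real.exp (-(γ/2)) < 1 := by rw [Real.exp_lt_one_iff]; linarith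
    linarith
  have e2 : (0:ℝ) < 1 - Real.exp (-(2/γ)) := by
    have : Real.exp (-(2/γ)) < 1 := by
      rw [Real.exp_lt_one_iff]
      have : 0 < 2/γ := by positivity
      linarith
    linarith
  unfold cg
  have hmul : (1 - Real.exp (-(γ/2))) * (1 - Real.exp (-(2/γ))) ≤
      (1 - Real.exp (-(2*(t*γ/4)))) * (1 - Real.exp (-(2*(t/γ)))) :=
    mul_le_mul h1 h2 e2.le (by linarith [Real.exp_pos (-(2*(t*γ/4)))])
  have hexp : (0:ℝ) < Real.exp (Q/2 * t) := Real.exp_pos _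
  calc (1 - Real.exp (-(γ/2))) * (1 - Real.exp (-(2/γ))) / 4 * Real.exp (Q/2 * t)
      ≤ (1 - Real.exp (-(2*(t*γ/4)))) * (1 - Real.exp (-(2*(t/γ)))) / 4 * Real.exp (Q/2 * t) := by
        nlinarith [mul_le_mul_of_nonneg_right hmul hexp.le]
    _ = Real.exp (t*γ/4) * (1 - Real.exp (-(2*(t*γ/4)))) / 2 *
        (Real.exp (t/γ) * (1 - Real.exp (-(2*(t/γ)))) / 2) := by
        rw [← hsum]; ring

noncomputable def Dc (γ t : ℝ) : ℂ :=
  Complex.sinh ((t : ℂ) * (γ : ℂ) / 4) * Complex.sinh ((t : ℂ) / (γ : ℂ))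

lemma Dc_eq (γ t : ℝ) : Dc γ t = ((Dr γ t : ℝ) : ℂ) := by
  unfold Dc Dr
  push_cast
  rfl

lemma norm_Dc (γ t : ℝ) : ‖Dc γ t‖ = |Dr γ t| := by
  rw [Dc_eq, Complex.norm_real, Real.norm_eq_abs]

noncomputable def dozzDeriv (γ Q : ℝ) (z : ℂ) (t : ℝ) : ℂ :=
  (-2*((Q:ℂ)/2 - z) * Complex.exp (-(t:ℂ))
    + ((t:ℂ)/2) * Complex.sinh (((Q:ℂ)/2 - z) * (t:ℂ)) / Dc γ t) / (t:ℂ)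

lemma hasDeriv_dozz (γ Q : ℝ) (z : ℂ) (t : ℝ) :
    HasDerivAt (fun z => dozzIntegrand γ Q z t) (dozzDeriv γ Q z t) z := by
  have h1 : HasDerivAt (fun z : ℂ => (Q:ℂ)/2 - z) (-1) z := (hasDerivAt_id z).const_sub ((Q:ℂ)/2)
  have h2 := (h1.pow 2).mul_const (Complex.exp (-(t:ℂ)))
  have h3 := (h1.mul_const ((t:ℂ))).div_const 2
  have h4 := (h3.csinh.pow 2).div_const
    (Complex.sinh ((t:ℂ)*(γ:ℂ)/4) * Complex.sinh ((t:ℂ)/(γ:ℂ)))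
  have h5 := (h2.sub h4).div_const ((t:ℂ))
  unfold dozzIntegrand
  refine HasDerivAt.congr_deriv h5 ?_
  unfold dozzDeriv Dc
  have hs : Complex.sinh (((Q:ℂ)/2 - z) * (t:ℂ)) =
      2 * Complex.sinh (((Q:ℂ)/2 - z) * (t:ℂ)/2) * Complex.cosh (((Q:ℂ)/2 - z) * (t:ℂ)/2) := by
    rw [← Complex.sinh_two_mul]
    ring_nf
  rw [hs]
  ring

lemma dozz_decomp (γ Q : ℝ) (z : ℂ) (t : ℝ) (hγ : γ ≠ 0) (ht : (t:ℂ) ≠ 0)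
    (hD : Dc γ t ≠ 0) :
    dozzIntegrand γ Q z t =
      ((Q:ℂ)/2 - z)^2 * (Complex.exp (-(t:ℂ)) - 1) / (t:ℂ)
      + (((Q:ℂ)/2 - z)^2 * (Dc γ t - (t:ℂ)^2/4)
         + ((((Q:ℂ)/2 - z) * (t:ℂ)/2)^2 - Complex.sinh (((Q:ℂ)/2 - z) * (t:ℂ)/2)^2))
        / (Dc γ t * (t:ℂ)) := by
  unfold dozzIntegrand Dc at *
  have hD1 := left_ne_zero_of_mul hD
  have hD2 := right_ne_zero_of_mul hD
  field_simp
  ring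

lemma dozzDeriv_decomp (γ Q : ℝ) (z : ℂ) (t : ℝ) (ht : (t:ℂ) ≠ 0) (hD : Dc γ t ≠ 0) :
    dozzDeriv γ Q z t =
      2*((Q:ℂ)/2 - z) * (1 - Complex.exp (-(t:ℂ))) / (t:ℂ)
      + (Complex.sinh (((Q:ℂ)/2 - z) * (t:ℂ)) - ((Q:ℂ)/2 - z) * (t:ℂ)) / (2 * Dc γ t)
      + ((Q:ℂ)/2 - z) * ((t:ℂ)^2 - 4 * Dc γ t) / (2 * Dc γ t * (t:ℂ)) := by
  have h2D : (2 * Dc γ t : ℂ) ≠ 0 := mul_ne_zero two_ne_zero hD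
  have h2Dt : (2 * Dc γ t * (t:ℂ)) ≠ 0 := mul_ne_zero h2D ht
  have hL : dozzDeriv γ Q z t =
      ((t:ℂ) * Complex.sinh (((Q:ℂ)/2 - z) * (t:ℂ))
        - 4*((Q:ℂ)/2 - z)*Complex.exp (-(t:ℂ))*Dc γ t) / (2 * Dc γ t * (t:ℂ)) := by
    unfold dozzDeriv
    field_simp
    ring
  rw [hL, div_add_div _ _ ht h2D, div_add_div _ _ (mul_ne_zero ht h2D) h2Dt,
    div_eq_div_iff h2Dt (mul_ne_zero (mul_ne_zero ht h2D) h2Dt)]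
  ring

end Aux

section Norms

lemma norm_ofReal_pos {t : ℝ} (ht : 0 < t) : ‖(t:ℂ)‖ = t := by
  rw [Complex.norm_real, Real.norm_eq_abs, abs_of_pos ht]

lemma norm_cexp_neg (t : ℝ) : ‖Complex.exp (-(t:ℂ))‖ = Real.exp (-t) := by
  rw [Complex.norm_exp]
  norm_num

lemma norm_cexp_neg_sub_one {t : ℝ} (ht : 0 ≤ t) : ‖Complex.exp (-(t:ℂ)) - 1‖ ≤ t := by
  have h1 : Complex.exp (-(t:ℂ)) - 1 = ((Real.exp (-t) - 1 : ℝ) : ℂ) := by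
    push_cast
    ring
  rw [h1, Complex.norm_real, Real.norm_eq_abs, abs_of_nonpos (by
    have := Real.exp_le_one_iff.2 (by linarith : -t ≤ 0)
    linarith)]
  linarith [Real.add_one_le_exp (-t)]

lemma re_a_eq (Q : ℝ) (z : ℂ) : ((Q:ℂ)/2 - z).re = Q/2 - z.re := by
  have h1 : (Q:ℂ)/2 = ((Q/2 : ℝ) : ℂ) := by push_cast; ring
  rw [h1]
  simp

lemma mul_half_eq (a : ℂ) (t : ℝ) : a * (t:ℂ)/2 = a * (((t/2 : ℝ)):ℂ) := by push_cast; ring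

lemma re_mul_half (a : ℂ) (t : ℝ) : (a * (t:ℂ)/2).re = a.re * (t/2) := by
  rw [mul_half_eq]
  simp [Complex.mul_re]

lemma norm_mul_half (a : ℂ) {t : ℝ} (ht : 0 ≤ t) : ‖a * (t:ℂ)/2‖ = ‖a‖ * (t/2) := by
  rw [mul_half_eq, norm_mul, Complex.norm_real, Real.norm_eq_abs, _root_.abs_of_nonneg (by linarith : (0:ℝ) ≤ t/2)]

lemma norm_mul_t (a : ℂ) {t : ℝ} (ht : 0 ≤ t) : ‖a * (t:ℂ)‖ = ‖a‖ * t := by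
  rw [norm_mul, Complex.norm_real, Real.norm_eq_abs, _root_.abs_of_nonneg ht]

lemma re_mul_t (a : ℂ) (t : ℝ) : (a * (t:ℂ)).re = a.re * t := by
  simp [Complex.mul_re]

end Norms

section Bounds

noncomputable def Mf (γ R : ℝ) : ℝ :=
  max ((R^2 + 4*(R^2 * Cg γ + (R/2)^3*(Real.exp (R/2)+3)*(Real.exp (R/2)+R))) * Real.exp 1)
      (R^2 + 1/cg γ)

lemma common_facts {γ Q δ : ℝ} (hγ1 : 0 < γ) (hQ : Q = 2/γ + γ/2)
    (hδ : 0 < δ) {z : ℂ} (hz1 : δ ≤ z.re) (hz2 : z.re ≤ Q - δ) :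
    |((Q:ℂ)/2 - z).re| ≤ Q/2 - δ := by
  rw [re_a_eq, abs_le]
  constructor <;> [skip; skip] <;> nlinarith

lemma bound_f {γ Q δ R : ℝ} (hγ1 : 0 < γ) (hγ2 : γ < 2) (hQ : Q = 2/γ + γ/2)
    (hδ : 0 < δ) (hR : 0 ≤ R) {z : ℂ} (hz1 : δ ≤ z.re) (hz2 : z.re ≤ Q - δ)
    (hzR : ‖(Q:ℂ)/2 - z‖ ≤ R) {t : ℝ} (ht : 0 < t) :
    ‖dozzIntegrand γ Q z t‖ ≤ Mf γ R * Real.exp (-(min 1 δ) * t) := by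
  set a : ℂ := (Q:ℂ)/2 - z with ha_def
  set m : ℝ := min 1 δ with hm_def
  have hm0 : 0 < m := lt_min one_pos hδ
  have hm1 : m ≤ 1 := min_le_left _ _
  have hmδ : m ≤ δ := min_le_right _ _
  have hDr : 0 < Dr γ t := Dr_pos hγ1 ht
  have htC : (t:ℂ) ≠ 0 := Complex.ofReal_ne_zero.2 ht.ne'
  have hDc : Dc γ t ≠ 0 := by
    rw [Dc_eq]
    exact Complex.ofReal_ne_zero.2 hDr.ne'
  have hare : |a.re| ≤ Q/2 - δ := common_facts hγ1 hQ hδ hz1 hz2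
  have hna : ‖a‖ ≤ R := hzR
  have hexp_pos : (0:ℝ) < Real.exp (-m * t) := Real.exp_pos _
  have hcg := cg_pos hγ1
  rcases le_or_gt t 1 with ht1 | ht1
  · -- small t
    have hB1 : ‖dozzIntegrand γ Q z t‖ ≤
        R^2 + 4*(R^2 * Cg γ + (R/2)^3*(Real.exp (R/2)+3)*(Real.exp (R/2)+R)) := by
      rw [dozz_decomp γ Q z t hγ1.ne' htC hDc]
      refine (norm_add_le _ _).trans ?_
      have hX : ‖a^2 * (Complex.exp (-(t:ℂ)) - 1) / (t:ℂ)‖ ≤ R^2 := by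
        rw [norm_div, norm_mul, norm_pow, norm_ofReal_pos ht]
        rw [div_le_iff₀ ht]
        have h1 : ‖Complex.exp (-(t:ℂ)) - 1‖ ≤ t := norm_cexp_neg_sub_one ht.le
        have h2 : ‖a‖^2 ≤ R^2 := by nlinarith [norm_nonneg a]
        nlinarith [norm_nonneg a, norm_nonneg (Complex.exp (-(t:ℂ)) - 1),
          pow_nonneg (norm_nonneg a) 2]
      have hY : ‖(a^2 * (Dc γ t - (t:ℂ)^2/4)
          + ((a * (t:ℂ)/2)^2 - Complex.sinh (a * (t:ℂ)/2)^2)) / (Dc γ t * (t:ℂ))‖ ≤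
          4*(R^2 * Cg γ + (R/2)^3*(Real.exp (R/2)+3)*(Real.exp (R/2)+R)) := by
        rw [norm_div]
        have hden : ‖Dc γ t * (t:ℂ)‖ = Dr γ t * t := by
          rw [norm_mul, norm_Dc, _root_.abs_of_pos hDr, norm_ofReal_pos ht]
        rw [hden]
        have hnum : ‖a^2 * (Dc γ t - (t:ℂ)^2/4)
            + ((a * (t:ℂ)/2)^2 - Complex.sinh (a * (t:ℂ)/2)^2)‖ ≤
            (R^2 * Cg γ + (R/2)^3*(Real.exp (R/2)+3)*(Real.exp (R/2)+R)) * t^3 := by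
          refine (norm_add_le _ _).trans ?_
          have hn1 : ‖a^2 * (Dc γ t - (t:ℂ)^2/4)‖ ≤ R^2 * Cg γ * t^3 := by
            rw [norm_mul, norm_pow]
            have hDD : Dc γ t - (t:ℂ)^2/4 = ((Dr γ t - t^2/4 : ℝ) : ℂ) := by
              rw [Dc_eq]
              push_cast
              ring
            rw [hDD, Complex.norm_real, Real.norm_eq_abs]
            have h3 := Dr_sub hγ1 ht.le ht1
            have h2 : ‖a‖^2 ≤ R^2 := by nlinarith [norm_nonneg a]
            calc ‖a‖^2 * |Dr γ t - t^2/4| ≤ R^2 * (Cg γ * t^3) := by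
                  refine mul_le_mul h2 h3 (abs_nonneg _) (by nlinarith)
              _ = R^2 * Cg γ * t^3 := by ring
          have hn2 : ‖(a * (t:ℂ)/2)^2 - Complex.sinh (a * (t:ℂ)/2)^2‖ ≤
              (R/2)^3*(Real.exp (R/2)+3)*(Real.exp (R/2)+R) * t^3 := by
            set w : ℂ := a * (t:ℂ)/2 with hw_def
            have hfac : w^2 - Complex.sinh w^2 = -((Complex.sinh w - w) * (Complex.sinh w + w)) := by
              ring
            rw [hfac, norm_neg, norm_mul]
            have hnw : ‖w‖ = ‖a‖ * (t/2) := norm_mul_half a ht.le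
            have hnwR : ‖w‖ ≤ R/2 := by
              rw [hnw]
              nlinarith [norm_nonneg a]
            have h1 : ‖Complex.sinh w - w‖ ≤ (R/2)^3 * t^3 * (Real.exp (R/2)+3) := by
              refine (sinhCubic w).trans ?_
              have hw3 : ‖w‖^3 ≤ (R/2)^3 * t^3 := by
                rw [hnw]
                have : ‖a‖ * (t/2) ≤ (R/2) * t := by nlinarith [norm_nonneg a]
                calc (‖a‖ * (t/2))^3 ≤ ((R/2)*t)^3 := by
                      refine pow_le_pow_left₀ (by positivity) this 3
                  _ = (R/2)^3 * t^3 := by ring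
              refine mul_le_mul hw3 ?_ (by positivity) (by positivity)
              have := Real.exp_le_exp.2 hnwR
              linarith
            have h2 : ‖Complex.sinh w + w‖ ≤ Real.exp (R/2) + R := by
              refine (norm_add_le _ _).trans ?_
              have hs := abs_sinh_le w
              have : Real.exp |w.re| ≤ Real.exp (R/2) := by
                refine Real.exp_le_exp.2 ((Complex.abs_re_le_norm w).trans hnwR)
              have hwR : ‖w‖ ≤ R := hnwR.trans (by linarith)
              linarith
            calc ‖Complex.sinh w - w‖ * ‖Complex.sinh w + w‖
                ≤ ((R/2)^3 * t^3 * (Real.exp (R/2)+3)) * (Real.exp (R/2) + R) := by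
                  refine mul_le_mul h1 h2 (norm_nonneg _) (by positivity)
              _ = (R/2)^3*(Real.exp (R/2)+3)*(Real.exp (R/2)+R) * t^3 := by ring
          linarith
        have hden_lb : t^3/4 ≤ Dr γ t * t := by
          have := Dr_lower hγ1 ht.le
          nlinarith
        calc ‖a^2 * (Dc γ t - (t:ℂ)^2/4) + ((a * (t:ℂ)/2)^2 - Complex.sinh (a * (t:ℂ)/2)^2)‖
              / (Dr γ t * t)
            ≤ ((R^2 * Cg γ + (R/2)^3*(Real.exp (R/2)+3)*(Real.exp (R/2)+R)) * t^3) / (t^3/4) := by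
              have hC2nn : (0:ℝ) ≤ (R/2)^3*(Real.exp (R/2)+3)*(Real.exp (R/2)+R) := by positivity
              have hCgR := mul_nonneg (pow_nonneg hR 2) (Cg_nonneg hγ1)
              have hnn : (0:ℝ) ≤ (R^2 * Cg γ + (R/2)^3*(Real.exp (R/2)+3)*(Real.exp (R/2)+R)) * t^3 :=
                mul_nonneg (by linarith) (pow_nonneg ht.le 3)
              refine div_le_div₀ hnn hnum (by positivity) hden_lb
          _ = 4*(R^2 * Cg γ + (R/2)^3*(Real.exp (R/2)+3)*(Real.exp (R/2)+R)) := by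
              field_simp
      linarith
    have hone : 1 ≤ Real.exp 1 * Real.exp (-m * t) := by
      rw [← Real.exp_add]
      have h0 : (0:ℝ) ≤ 1 + -m * t := by nlinarith
      nlinarith [Real.add_one_le_exp (1 + -m * t)]
    calc ‖dozzIntegrand γ Q z t‖
        ≤ R^2 + 4*(R^2 * Cg γ + (R/2)^3*(Real.exp (R/2)+3)*(Real.exp (R/2)+R)) := hB1
      _ ≤ (R^2 + 4*(R^2 * Cg γ + (R/2)^3*(Real.exp (R/2)+3)*(Real.exp (R/2)+R)))
          * (Real.exp 1 * Real.exp (-m * t)) := by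
          have hBpos : 0 ≤ R^2 + 4*(R^2 * Cg γ + (R/2)^3*(Real.exp (R/2)+3)*(Real.exp (R/2)+R)) := by
            have := Cg_nonneg hγ1
            positivity
          nlinarith
      _ ≤ Mf γ R * Real.exp (-m * t) := by
          rw [show (R^2 + 4*(R^2 * Cg γ + (R/2)^3*(Real.exp (R/2)+3)*(Real.exp (R/2)+R)))
              * (Real.exp 1 * Real.exp (-m * t)) =
              ((R^2 + 4*(R^2 * Cg γ + (R/2)^3*(Real.exp (R/2)+3)*(Real.exp (R/2)+R)))
              * Real.exp 1) * Real.exp (-m * t) from by ring]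
          refine mul_le_mul_of_nonneg_right (le_max_left _ _) hexp_pos.le
  · -- large t
    have ht0 : 1 ≤ t := ht1.le
    unfold dozzIntegrand
    rw [← ha_def]
    rw [norm_div, norm_ofReal_pos ht]
    have hA : ‖a^2 * Complex.exp (-(t:ℂ))‖ ≤ R^2 * Real.exp (-t) := by
      rw [norm_mul, norm_pow, norm_cexp_neg]
      have h2 : ‖a‖^2 ≤ R^2 := by nlinarith [norm_nonneg a]
      nlinarith [Real.exp_pos (-t)]
    have hB : ‖Complex.sinh (a * (t:ℂ)/2)^2 / (Complex.sinh ((t:ℂ)*(γ:ℂ)/4) * Complex.sinh ((t:ℂ)/(γ:ℂ)))‖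
        ≤ Real.exp (-δ*t) * Real.exp (Q/2*t) / Dr γ t := by
      have hdenD : (Complex.sinh ((t:ℂ)*(γ:ℂ)/4) * Complex.sinh ((t:ℂ)/(γ:ℂ))) = Dc γ t := rfl
      rw [hdenD, norm_div, norm_Dc, _root_.abs_of_pos hDr, norm_pow]
      refine (div_le_div_iff_of_pos_right hDr).2 ?_
      have hs := abs_sinh_le (a * (t:ℂ)/2)
      have hre : |(a * (t:ℂ)/2).re| = |a.re| * (t/2) := by
        rw [re_mul_half, abs_mul, _root_.abs_of_nonneg (by linarith : (0:ℝ) ≤ t/2)]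
      rw [hre] at hs
      calc ‖Complex.sinh (a * (t:ℂ)/2)‖^2 ≤ (Real.exp (|a.re| * (t/2)))^2 := by
            refine pow_le_pow_left₀ (norm_nonneg _) hs 2
        _ = Real.exp (|a.re| * t) := by
            rw [sq, ← Real.exp_add]
            congr 1
            ring
        _ ≤ Real.exp (-δ*t) * Real.exp (Q/2*t) := by
            rw [← Real.exp_add]
            refine Real.exp_le_exp.2 ?_
            nlinarith
    refine le_trans ((div_le_div_iff_of_pos_right ht).2 ((norm_sub_le _ _).trans (add_le_add hA hB))) ?_
    have hDr_exp := Dr_lower_exp hγ1 hQ ht0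
    have key1 : R^2 * Real.exp (-t) / t ≤ R^2 * Real.exp (-m*t) := by
      rw [div_le_iff₀ ht]
      have h1 : Real.exp (-t) ≤ Real.exp (-m*t) := Real.exp_le_exp.2 (by nlinarith)
      calc R^2 * Real.exp (-t) ≤ R^2 * Real.exp (-m*t) :=
            mul_le_mul_of_nonneg_left h1 (pow_nonneg hR 2)
        _ = R^2 * Real.exp (-m*t) * 1 := by ring
        _ ≤ R^2 * Real.exp (-m*t) * t :=
            mul_le_mul_of_nonneg_left ht0 (by positivity)
    have key2 : Real.exp (-δ*t) * Real.exp (Q/2*t) / Dr γ t / t ≤ (1/cg γ) * Real.exp (-m*t) := by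
      have h1 : Real.exp (-δ*t) * Real.exp (Q/2*t) / Dr γ t ≤ Real.exp (-δ*t) / cg γ := by
        rw [div_le_div_iff₀ hDr (by positivity)]
        calc Real.exp (-δ*t) * Real.exp (Q/2*t) * cg γ
            = Real.exp (-δ*t) * (cg γ * Real.exp (Q/2*t)) := by ring
          _ ≤ Real.exp (-δ*t) * Dr γ t := by
              refine mul_le_mul_of_nonneg_left hDr_exp (Real.exp_pos _).le
          _ = Real.exp (-δ*t) * Dr γ t := rfl
      have h2 : Real.exp (-δ*t) / cg γ / t ≤ Real.exp (-m*t) / cg γ := by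
        rw [div_div, div_le_div_iff₀ (by positivity) hcg]
        have h3 : Real.exp (-δ*t) ≤ Real.exp (-m*t) := Real.exp_le_exp.2 (by nlinarith)
        calc Real.exp (-δ*t) * cg γ ≤ Real.exp (-m*t) * cg γ :=
              mul_le_mul_of_nonneg_right h3 hcg.le
          _ = Real.exp (-m*t) * cg γ * 1 := by ring
          _ ≤ Real.exp (-m*t) * cg γ * t := mul_le_mul_of_nonneg_left ht0 (by positivity)
          _ = Real.exp (-m*t) * (cg γ * t) := by ring

      calc Real.exp (-δ*t) * Real.exp (Q/2*t) / Dr γ t / t ≤ Real.exp (-δ*t) / cg γ / t := by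
            exact (div_le_div_iff_of_pos_right ht).2 h1
        _ ≤ Real.exp (-m*t) / cg γ := h2
        _ = (1/cg γ) * Real.exp (-m*t) := by ring
    have hsplit : (R^2 * Real.exp (-t) + Real.exp (-δ*t) * Real.exp (Q/2*t) / Dr γ t) / t
        = R^2 * Real.exp (-t) / t + Real.exp (-δ*t) * Real.exp (Q/2*t) / Dr γ t / t := by
      ring
    rw [hsplit]
    calc R^2 * Real.exp (-t) / t + Real.exp (-δ*t) * Real.exp (Q/2*t) / Dr γ t / t
        ≤ R^2 * Real.exp (-m*t) + (1/cg γ) * Real.exp (-m*t) := add_le_add key1 key2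
      _ = (R^2 + 1/cg γ) * Real.exp (-m*t) := by ring
      _ ≤ Mf γ R * Real.exp (-m*t) := mul_le_mul_of_nonneg_right (le_max_right _ _) hexp_pos.le

end Bounds

section BoundG

noncomputable def Mg (γ R : ℝ) : ℝ :=
  max ((2*R + 2*R^3*(Real.exp R + 3) + 8*R*Cg γ) * Real.exp 1)
      (2*R + 1/(2*cg γ))

lemma bound_G {γ Q δ R : ℝ} (hγ1 : 0 < γ) (hγ2 : γ < 2) (hQ : Q = 2/γ + γ/2)
    (hδ : 0 < δ) (hR : 0 ≤ R) {z : ℂ} (hz1 : δ ≤ z.re) (hz2 : z.re ≤ Q - δ)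
    (hzR : ‖(Q:ℂ)/2 - z‖ ≤ R) {t : ℝ} (ht : 0 < t) :
    ‖dozzDeriv γ Q z t‖ ≤ Mg γ R * Real.exp (-(min 1 δ) * t) := by
  set a : ℂ := (Q:ℂ)/2 - z with ha_def
  set m : ℝ := min 1 δ with hm_def
  have hm0 : 0 < m := lt_min one_pos hδ
  have hm1 : m ≤ 1 := min_le_left _ _
  have hmδ : m ≤ δ := min_le_right _ _
  have hDr : 0 < Dr γ t := Dr_pos hγ1 ht
  have htC : (t:ℂ) ≠ 0 := Complex.ofReal_ne_zero.2 ht.ne'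
  have hDc : Dc γ t ≠ 0 := by
    rw [Dc_eq]
    exact Complex.ofReal_ne_zero.2 hDr.ne'
  have hare : |a.re| ≤ Q/2 - δ := common_facts hγ1 hQ hδ hz1 hz2
  have hna : ‖a‖ ≤ R := hzR
  have hexp_pos : (0:ℝ) < Real.exp (-m * t) := Real.exp_pos _
  have hcg := cg_pos hγ1
  have h2C : ‖(2:ℂ)‖ = (2:ℝ) := by norm_num
  rcases le_or_gt t 1 with ht1 | ht1
  · -- small t
    have hB2 : ‖dozzDeriv γ Q z t‖ ≤ 2*R + 2*R^3*(Real.exp R + 3) + 8*R*Cg γ := by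
      rw [dozzDeriv_decomp γ Q z t htC hDc]
      refine (norm_add_le _ _).trans (le_trans (add_le_add_left (norm_add_le _ _) _) ?_)
      have hT1 : ‖2*a*(1 - Complex.exp (-(t:ℂ)))/(t:ℂ)‖ ≤ 2*R := by
        rw [norm_div, norm_mul, norm_mul, norm_ofReal_pos ht, h2C]
        rw [div_le_iff₀ ht]
        have h1 : ‖1 - Complex.exp (-(t:ℂ))‖ ≤ t := by
          rw [norm_sub_rev]
          exact norm_cexp_neg_sub_one ht.le
        nlinarith [norm_nonneg a, norm_nonneg (1 - Complex.exp (-(t:ℂ)))]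
      have hT2 : ‖(Complex.sinh (a*(t:ℂ)) - a*(t:ℂ))/(2*Dc γ t)‖ ≤ 2*R^3*(Real.exp R + 3) := by
        rw [norm_div, norm_mul, h2C, norm_Dc, _root_.abs_of_pos hDr]
        have hnum : ‖Complex.sinh (a*(t:ℂ)) - a*(t:ℂ)‖ ≤ R^3*t^2*(Real.exp R + 3) := by
          refine (sinhCubic _).trans ?_
          have hn : ‖a*(t:ℂ)‖ = ‖a‖*t := norm_mul_t a ht.le
          have hnR : ‖a*(t:ℂ)‖ ≤ R := by
            rw [hn]
            nlinarith [norm_nonneg a]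
          have h3 : ‖a*(t:ℂ)‖^3 ≤ R^3*t^2 := by
            rw [hn]
            have h4 : ‖a‖*t ≤ R*t := by nlinarith [norm_nonneg a]
            calc (‖a‖*t)^3 ≤ (R*t)^3 := pow_le_pow_left₀ (by positivity) h4 3
              _ = R^3*(t^2*t) := by ring
              _ ≤ R^3*(t^2*1) := by
                  refine mul_le_mul_of_nonneg_left ?_ (by positivity)
                  nlinarith
              _ = R^3*t^2 := by ring
          refine mul_le_mul h3 ?_ (by positivity) (by positivity)
          have := Real.exp_le_exp.2 hnR
          linarith
        have hden : t^2/2 ≤ 2 * Dr γ t := by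
          have := Dr_lower hγ1 ht.le
          nlinarith
        calc ‖Complex.sinh (a*(t:ℂ)) - a*(t:ℂ)‖ / (2 * Dr γ t)
            ≤ (R^3*t^2*(Real.exp R + 3)) / (t^2/2) :=
              div_le_div₀ (by positivity) hnum (by positivity) hden
          _ = 2*R^3*(Real.exp R + 3) := by
              field_simp
      have hT3 : ‖a*((t:ℂ)^2 - 4*Dc γ t)/(2*Dc γ t*(t:ℂ))‖ ≤ 8*R*Cg γ := by
        rw [norm_div, norm_mul]
        have hden : ‖2*Dc γ t*(t:ℂ)‖ = 2*Dr γ t*t := by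
          rw [norm_mul, norm_mul, h2C, norm_Dc, _root_.abs_of_pos hDr, norm_ofReal_pos ht]
        rw [hden]
        have hnum : ‖(t:ℂ)^2 - 4*Dc γ t‖ ≤ 4*(Cg γ*t^3) := by
          have hDD : (t:ℂ)^2 - 4*Dc γ t = ((t^2 - 4*Dr γ t : ℝ) : ℂ) := by
            rw [Dc_eq]
            push_cast
            ring
          rw [hDD, Complex.norm_real, Real.norm_eq_abs]
          have h5 : t^2 - 4*Dr γ t = -(4*(Dr γ t - t^2/4)) := by ring
          rw [h5, abs_neg, abs_mul, _root_.abs_of_nonneg (by norm_num : (0:ℝ) ≤ 4)]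
          have := Dr_sub hγ1 ht.le ht1
          linarith
        have hden_lb : t^3/2 ≤ 2*Dr γ t*t := by
          have := Dr_lower hγ1 ht.le
          nlinarith
        have hCg := Cg_nonneg hγ1
        calc ‖a‖ * ‖(t:ℂ)^2 - 4*Dc γ t‖ / (2*Dr γ t*t)
            ≤ (R * (4*(Cg γ*t^3))) / (t^3/2) := by
              refine div_le_div₀ ?_ ?_ (by positivity) hden_lb
              · have := mul_nonneg hR (by positivity : (0:ℝ) ≤ 4*(Cg γ*t^3))
                nlinarith [mul_nonneg hR (mul_nonneg hCg (pow_nonneg ht.le 3))]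
              · refine mul_le_mul hna hnum (norm_nonneg _) hR
          _ = 8*R*Cg γ := by
              field_simp
              ring
      linarith
    have hone : 1 ≤ Real.exp 1 * Real.exp (-m * t) := by
      rw [← Real.exp_add]
      have h0 : (0:ℝ) ≤ 1 + -m * t := by nlinarith
      nlinarith [Real.add_one_le_exp (1 + -m * t)]
    have hB2nn : (0:ℝ) ≤ 2*R + 2*R^3*(Real.exp R + 3) + 8*R*Cg γ := by
      have h1 : (0:ℝ) ≤ 2*R^3*(Real.exp R + 3) := by positivity
      have h2 := mul_nonneg (mul_nonneg (by norm_num : (0:ℝ) ≤ 8) hR) (Cg_nonneg hγ1)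
      nlinarith
    calc ‖dozzDeriv γ Q z t‖ ≤ 2*R + 2*R^3*(Real.exp R + 3) + 8*R*Cg γ := hB2
      _ ≤ (2*R + 2*R^3*(Real.exp R + 3) + 8*R*Cg γ) * (Real.exp 1 * Real.exp (-m * t)) := by
          nlinarith
      _ = ((2*R + 2*R^3*(Real.exp R + 3) + 8*R*Cg γ) * Real.exp 1) * Real.exp (-m * t) := by
          ring
      _ ≤ Mg γ R * Real.exp (-m * t) := mul_le_mul_of_nonneg_right (le_max_left _ _) hexp_pos.le
  · -- large t
    have ht0 : 1 ≤ t := ht1.le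
    unfold dozzDeriv
    rw [← ha_def, norm_div, norm_ofReal_pos ht]
    have hX : ‖-2*a*Complex.exp (-(t:ℂ))‖ ≤ 2*R*Real.exp (-t) := by
      have hfl : -2*a*Complex.exp (-(t:ℂ)) = -(2*a*Complex.exp (-(t:ℂ))) := by ring
      rw [hfl, norm_neg, norm_mul, norm_mul, h2C, norm_cexp_neg]
      nlinarith [Real.exp_pos (-t), norm_nonneg a]
    have hY : ‖(t:ℂ)/2 * Complex.sinh (a*(t:ℂ)) / Dc γ t‖ ≤
        (t/2) * (Real.exp (-δ*t) * Real.exp (Q/2*t)) / Dr γ t := by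
      rw [norm_div, norm_Dc, _root_.abs_of_pos hDr, norm_mul]
      have ht2 : ‖(t:ℂ)/2‖ = t/2 := by
        rw [show (t:ℂ)/2 = ((t/2:ℝ):ℂ) by push_cast; ring, Complex.norm_real,
          Real.norm_eq_abs, _root_.abs_of_pos (by linarith : (0:ℝ) < t/2)]
      rw [ht2]
      refine (div_le_div_iff_of_pos_right hDr).2 ?_
      refine mul_le_mul_of_nonneg_left ?_ (by linarith)
      refine (abs_sinh_le _).trans ?_
      rw [re_mul_t, ← Real.exp_add]
      refine Real.exp_le_exp.2 ?_
      have h6 : |a.re * t| ≤ (Q/2 - δ)*t := by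
        rw [abs_mul, _root_.abs_of_pos ht]
        exact mul_le_mul_of_nonneg_right hare ht.le
      nlinarith [le_abs_self (a.re * t)]
    refine le_trans ((div_le_div_iff_of_pos_right ht).2 ((norm_add_le _ _).trans (add_le_add hX hY))) ?_
    have hDr_exp := Dr_lower_exp hγ1 hQ ht0
    have key1 : 2*R*Real.exp (-t)/t ≤ 2*R*Real.exp (-m*t) := by
      rw [div_le_iff₀ ht]
      have h1 : Real.exp (-t) ≤ Real.exp (-m*t) := Real.exp_le_exp.2 (by nlinarith)
      calc 2*R*Real.exp (-t) ≤ 2*R*Real.exp (-m*t) := by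
            nlinarith [Real.exp_pos (-t), Real.exp_pos (-m*t)]
        _ = 2*R*Real.exp (-m*t)*1 := by ring
        _ ≤ 2*R*Real.exp (-m*t)*t := mul_le_mul_of_nonneg_left ht0 (by positivity)
    have key2 : (t/2) * (Real.exp (-δ*t) * Real.exp (Q/2*t)) / Dr γ t / t ≤
        (1/(2*cg γ)) * Real.exp (-m*t) := by
      have heq : (t/2) * (Real.exp (-δ*t) * Real.exp (Q/2*t)) / Dr γ t / t =
          (Real.exp (-δ*t) * Real.exp (Q/2*t)) / (2 * Dr γ t) := by
        field_simp
      rw [heq]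
      have h1 : (Real.exp (-δ*t) * Real.exp (Q/2*t)) / (2 * Dr γ t) ≤
          (Real.exp (-δ*t) * Real.exp (Q/2*t)) / (2 * (cg γ * Real.exp (Q/2*t))) := by
        refine div_le_div_of_nonneg_left (by positivity) (by positivity) (by linarith)
      refine h1.trans ?_
      have h2 : (Real.exp (-δ*t) * Real.exp (Q/2*t)) / (2 * (cg γ * Real.exp (Q/2*t))) =
          Real.exp (-δ*t) / (2 * cg γ) := by
        rw [div_eq_div_iff (by positivity) (by positivity)]
        ring
      rw [h2]
      have h3 : Real.exp (-δ*t) ≤ Real.exp (-m*t) := Real.exp_le_exp.2 (by nlinarith)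
      rw [div_le_iff₀ (by positivity)]
      calc Real.exp (-δ*t) ≤ Real.exp (-m*t) := h3
        _ = 1/(2*cg γ) * Real.exp (-m*t) * (2*cg γ) := by
            field_simp
    have hsplit : (2*R*Real.exp (-t) + (t/2) * (Real.exp (-δ*t) * Real.exp (Q/2*t)) / Dr γ t) / t
        = 2*R*Real.exp (-t)/t + (t/2) * (Real.exp (-δ*t) * Real.exp (Q/2*t)) / Dr γ t / t := by
      ring
    rw [hsplit]
    calc 2*R*Real.exp (-t)/t + (t/2) * (Real.exp (-δ*t) * Real.exp (Q/2*t)) / Dr γ t / t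
        ≤ 2*R*Real.exp (-m*t) + (1/(2*cg γ)) * Real.exp (-m*t) := add_le_add key1 key2
      _ = (2*R + 1/(2*cg γ)) * Real.exp (-m*t) := by ring
      _ ≤ Mg γ R * Real.exp (-m*t) := mul_le_mul_of_nonneg_right (le_max_right _ _) hexp_pos.le

end BoundG

section Final

lemma Dc_ne {γ t : ℝ} (hγ : 0 < γ) (ht : 0 < t) : Dc γ t ≠ 0 := by
  rw [Dc_eq]
  exact Complex.ofReal_ne_zero.2 (Dr_pos hγ ht).ne'

lemma cont_f (γ Q : ℝ) (hγ : 0 < γ) (z : ℂ) :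
    ContinuousOn (fun t : ℝ => dozzIntegrand γ Q z t) (Set.Ioi 0) := by
  intro t ht
  have ht0 : (0:ℝ) < t := ht
  apply ContinuousAt.continuousWithinAt
  unfold dozzIntegrand
  refine ContinuousAt.div ?_ (by fun_prop) (Complex.ofReal_ne_zero.2 ht0.ne')
  refine ContinuousAt.sub (by fun_prop) ?_
  refine ContinuousAt.div (by fun_prop) (by fun_prop) ?_
  exact Dc_ne hγ ht0

lemma cont_G (γ Q : ℝ) (hγ : 0 < γ) (z : ℂ) :
    ContinuousOn (fun t : ℝ => dozzDeriv γ Q z t) (Set.Ioi 0) := by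
  intro t ht
  have ht0 : (0:ℝ) < t := ht
  apply ContinuousAt.continuousWithinAt
  unfold dozzDeriv Dc
  refine ContinuousAt.div ?_ (by fun_prop) (Complex.ofReal_ne_zero.2 ht0.ne')
  refine ContinuousAt.add (by fun_prop) ?_
  refine ContinuousAt.div (by fun_prop) (by fun_prop) ?_
  exact Dc_ne hγ ht0

theorem integrable_and_holomorphic_logUpsilon
    (γ : ℝ) (hγ : γ ∈ Set.Ioo (0 : ℝ) 2) (Q : ℝ) (hQ : Q = 2 / γ + γ / 2) :
    (∀ z : ℂ, 0 < z.re → z.re < Q →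
      IntegrableOn (fun t : ℝ => dozzIntegrand γ Q z t) (Set.Ioi (0 : ℝ)) volume) ∧
    DifferentiableOn ℂ (Fg γ Q) {z : ℂ | 0 < z.re ∧ z.re < Q} := by
  obtain ⟨hγ1, hγ2⟩ := hγ
  have hQ' : Q = 2/γ + γ/2 := hQ
  have intpart : ∀ z : ℂ, 0 < z.re → z.re < Q →
      IntegrableOn (fun t : ℝ => dozzIntegrand γ Q z t) (Set.Ioi (0 : ℝ)) volume := by
    intro z h1 h2
    set δ : ℝ := min z.re (Q - z.re) with hδ_def
    have hδ0 : 0 < δ := lt_min h1 (by linarith)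
    have hz1 : δ ≤ z.re := min_le_left _ _
    have hz2 : z.re ≤ Q - δ := by
      have := min_le_right z.re (Q - z.re)
      linarith
    set R : ℝ := ‖(Q:ℂ)/2 - z‖ with hR_def
    have hRnn : 0 ≤ R := norm_nonneg _
    have hm0 : 0 < min 1 δ := lt_min one_pos hδ0
    have hbd : IntegrableOn (fun t : ℝ => Mf γ R * Real.exp (-(min 1 δ) * t))
        (Set.Ioi (0:ℝ)) volume := (exp_neg_integrableOn_Ioi 0 hm0).const_mul _
    refine hbd.mono' ((cont_f γ Q hγ1 z).aestronglyMeasurable measurableSet_Ioi) ?_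
    rw [ae_restrict_iff' measurableSet_Ioi]
    exact Filter.Eventually.of_forall fun t ht =>
      bound_f hγ1 hγ2 hQ' hδ0 hRnn hz1 hz2 le_rfl ht
  refine ⟨intpart, ?_⟩
  intro z hz
  obtain ⟨h1, h2⟩ := hz
  have hmin0 : 0 < min z.re (Q - z.re) := lt_min h1 (by linarith)
  set ε : ℝ := (min z.re (Q - z.re))/2 with hε_def
  have hε0 : 0 < ε := by positivity
  have h2ε1 : 2*ε ≤ z.re := by
    have := min_le_left z.re (Q - z.re)
    rw [hε_def]
    linarith
  have h2ε2 : 2*ε ≤ Q - z.re := by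
    have := min_le_right z.re (Q - z.re)
    rw [hε_def]
    linarith
  set R : ℝ := ‖(Q:ℂ)/2 - z‖ + ε with hR_def
  have hRnn : 0 ≤ R := add_nonneg (norm_nonneg _) hε0.le
  have hm0 : 0 < min 1 ε := lt_min one_pos hε0
  have hball : ∀ x ∈ Metric.ball z ε, ε ≤ x.re ∧ x.re ≤ Q - ε ∧ ‖(Q:ℂ)/2 - x‖ ≤ R := by
    intro x hx
    rw [Metric.mem_ball, Complex.dist_eq] at hx
    have h3 : |x.re - z.re| < ε := by
      have h4 : |(x - z).re| ≤ ‖x - z‖ := by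
        exact Complex.abs_re_le_norm _
      rw [Complex.sub_re] at h4
      exact lt_of_le_of_lt h4 hx
    obtain ⟨h5, h6⟩ := abs_lt.1 h3
    refine ⟨by linarith, by linarith, ?_⟩
    calc ‖(Q:ℂ)/2 - x‖ = ‖((Q:ℂ)/2 - z) + (z - x)‖ := by ring_nf
      _ ≤ ‖(Q:ℂ)/2 - z‖ + ‖z - x‖ := norm_add_le _ _
      _ ≤ ‖(Q:ℂ)/2 - z‖ + ε := by
          rw [norm_sub_rev z x]
          linarith
  have key := hasDerivAt_integral_of_dominated_loc_of_deriv_le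
    (μ := volume.restrict (Set.Ioi (0:ℝ)))
    (F := fun w (t : ℝ) => dozzIntegrand γ Q w t)
    (F' := fun w (t : ℝ) => dozzDeriv γ Q w t)
    (x₀ := z)
    (bound := fun t => Mg γ R * Real.exp (-(min 1 ε) * t))
    (Metric.ball_mem_nhds z hε0)
    (Filter.Eventually.of_forall fun x =>
      (cont_f γ Q hγ1 x).aestronglyMeasurable measurableSet_Ioi)
    (intpart z h1 h2)
    ((cont_G γ Q hγ1 z).aestronglyMeasurable measurableSet_Ioi)
    (by
      rw [ae_restrict_iff' measurableSet_Ioi]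
      refine Filter.Eventually.of_forall fun t ht => fun x hx => ?_
      obtain ⟨e1, e2, e3⟩ := hball x hx
      exact bound_G hγ1 hγ2 hQ' hε0 hRnn e1 e2 e3 ht)
    ((exp_neg_integrableOn_Ioi 0 hm0).const_mul _)
    (Filter.Eventually.of_forall fun t => fun x _ => hasDeriv_dozz γ Q x t)
  obtain ⟨-, hdrv⟩ := key
  show DifferentiableWithinAt ℂ (fun w => ∫ t in Set.Ioi (0:ℝ), dozzIntegrand γ Q w t) _ z
  exact hdrv.differentiableAt.differentiableWithinAt

end Final
end

section
/- Let γ > 0 and Q = 2/γ + γ/2. For every E ∈ ℝ, if ψ : ℝ → ℂ is twice continuously differentiable, satisfies −(1/2)ψ''(c) + (Q²/2 + e^{γc})ψ(c) = E·ψ(c) for all c ∈ ℝ, and ∫_ℝ |ψ(c)|² dc < ∞, then ψ is identically zero. In other words, the toy-model Liouville Hamiltonian H_mod = −(1/2)d²/dc² + Q²/2 + e^{γc} has no L² eigenfunctions; its spectrum [Q²/2, ∞) is purely continuous. -/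
open MeasureTheory Complex

-- integrable nonneg function cannot be bounded below by a positive constant on an infinite-measure set
lemma aux_not_integrable {f : ℝ → ℝ} (hf : Integrable f) {s : Set ℝ}
    (hs : MeasurableSet s) (hvol : volume s = ⊤) {c : ℝ} (hc : 0 < c)
    (hbd : ∀ x ∈ s, c ≤ f x) : False := by
  have h1 : IntegrableOn f s := hf.integrableOn
  have h2 : IntegrableOn (fun _ => c) s := by
    refine h1.mono' aestronglyMeasurable_const ?_
    filter_upwards [ae_restrict_mem hs] with x hx
    rw [Real.norm_eq_abs, abs_of_pos hc]
    exact hbd x hx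
  rcases integrable_const_iff.mp h2 with h | h
  · exact hc.ne' h
  · have h := h.measure_univ_lt_top
    rw [Measure.restrict_apply_univ, hvol] at h; exact lt_irrefl _ h

set_option maxHeartbeats 1000000 in
lemma aux_real (γ : ℝ) (hγ : 0 < γ) (V₀ : ℝ) (u : ℝ → ℝ)
    (hdiff : Differentiable ℝ u) (hdiff' : Differentiable ℝ (deriv u))
    (hode : ∀ c, deriv (deriv u) c = (V₀ + 2 * Real.exp (γ * c)) * u c)
    (hL2 : Integrable (fun c => (u c) ^ 2)) : ∀ c, u c = 0 := by
  by_contra hcon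
  push_neg at hcon
  obtain ⟨c₁, hc₁⟩ := hcon
  set u' := deriv u with hu'def
  have hdu : ∀ c, HasDerivAt u (u' c) c := fun c => (hdiff c).hasDerivAt
  have hdu' : ∀ c, HasDerivAt u' ((V₀ + 2 * Real.exp (γ * c)) * u c) c := by
    intro c
    have := (hdiff' c).hasDerivAt
    rwa [hode c] at this
  have hucont : Continuous u := hdiff.continuous
  have hu'cont : Continuous u' := hdiff'.continuous
  rcases le_or_gt 0 V₀ with hV | hV
  · -- convexity argument
    set f : ℝ → ℝ := fun c => u c ^ 2 with hfdef
    set g : ℝ → ℝ := fun c => 2 * u c * u' c with hgdef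
    have hdf : ∀ c, HasDerivAt f (g c) c := by
      intro c
      have := (hdu c).pow 2
      exact this.congr_deriv (by norm_num [g] <;> ring)
    have hdg : ∀ c, HasDerivAt g
        ((2 * u' c) * u' c + (2 * u c) * ((V₀ + 2 * Real.exp (γ * c)) * u c)) c := by
      intro c
      exact ((hdu c).const_mul 2).mul (hdu' c)
    have hgmono : Monotone g := by
      refine monotone_of_deriv_nonneg (fun c => (hdg c).differentiableAt) (fun c => ?_)
      rw [(hdg c).deriv]
      have he := Real.exp_pos (γ * c)
      nlinarith [sq_nonneg (u c), sq_nonneg (u' c)]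
    have hfnn : ∀ c, 0 ≤ f c := fun c => sq_nonneg _
    -- key slope inequality
    have key : ∀ x₁ x : ℝ, f x₁ + g x₁ * (x - x₁) ≤ f x := by
      intro x₁ x
      set F : ℝ → ℝ := fun t => f t - g x₁ * t with hFdef
      have hdF : ∀ t, HasDerivAt F (g t - g x₁) t := by
        intro t
        exact ((hdf t).sub ((hasDerivAt_id t).const_mul (g x₁))).congr_deriv (by ring)
      rcases le_total x₁ x with hle | hle
      · have hmono : MonotoneOn F (Set.Ici x₁) := by
          refine monotoneOn_of_deriv_nonneg (convex_Ici x₁)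
            (Continuous.continuousOn (by fun_prop)) ?_ ?_
          · intro t _; exact (hdF t).differentiableAt.differentiableWithinAt
          · intro t ht
            rw [(hdF t).deriv]
            rw [interior_Ici] at ht
            have := hgmono (le_of_lt ht)
            linarith
        have := hmono (Set.self_mem_Ici) (Set.mem_Ici.mpr hle) hle
        simp only [F] at this
        nlinarith
      · have hanti : AntitoneOn F (Set.Iic x₁) := by
          refine antitoneOn_of_deriv_nonpos (convex_Iic x₁)
            (Continuous.continuousOn (by fun_prop)) ?_ ?_
          · intro t _; exact (hdF t).differentiableAt.differentiableWithinAt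
          · intro t ht
            rw [(hdF t).deriv]
            rw [interior_Iic] at ht
            have := hgmono (le_of_lt ht)
            linarith
        have := hanti (Set.mem_Iic.mpr hle) (Set.self_mem_Iic) hle
        simp only [F] at this
        nlinarith
    by_cases hA : ∃ x₁, 0 < g x₁
    · obtain ⟨x₁, hx₁⟩ := hA
      refine aux_not_integrable hL2 (s := Set.Ici (x₁ + 1)) measurableSet_Ici
        Real.volume_Ici hx₁ ?_
      intro x hx
      have hx' : x₁ + 1 ≤ x := hx
      have h1 := key x₁ x
      have h2 := hfnn x₁
      nlinarith
    · by_cases hB : ∃ x₁, g x₁ < 0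
      · obtain ⟨x₁, hx₁⟩ := hB
        refine aux_not_integrable hL2 (s := Set.Iic (x₁ - 1)) measurableSet_Iic
          Real.volume_Iic (c := -g x₁) (by linarith) ?_
        intro x hx
        have hx' : x ≤ x₁ - 1 := hx
        have h1 := key x₁ x
        have h2 := hfnn x₁
        nlinarith
      · push_neg at hA hB
        have hg0 : ∀ x, g x = 0 := fun x => le_antisymm (hA x) (hB x)
        have hfc : ∀ x, f x = f c₁ := by
          intro x
          refine is_const_of_deriv_eq_zero (fun c => (hdf c).differentiableAt) ?_ x c₁
          intro c; rw [(hdf c).deriv]; exact hg0 c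
        have hfpos : 0 < f c₁ :=
          lt_of_le_of_ne (sq_nonneg (u c₁)) (Ne.symm (pow_ne_zero 2 hc₁))
        refine aux_not_integrable hL2 (s := Set.Ici 0) measurableSet_Ici
          Real.volume_Ici hfpos ?_
        intro x _
        rw [hfc x]
  · -- oscillatory case : V₀ < 0
    set k2 : ℝ := -V₀ with hk2def
    have hk2 : 0 < k2 := by simp [k2]; linarith
    set m : ℝ := max 1 (1 / k2) with hmdef
    have hm1 : (1 : ℝ) ≤ m := le_max_left _ _
    have hmk2 : 1 ≤ m * k2 := by
      have : 1 / k2 ≤ m := le_max_right _ _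
      rw [div_le_iff₀ hk2] at this
      linarith
    set H : ℝ → ℝ := fun c => u' c ^ 2 + k2 * u c ^ 2 with hHdef
    have hHnn : ∀ c, 0 ≤ H c := by
      intro c; have := sq_nonneg (u' c); have := sq_nonneg (u c); positivity
    have hdH : ∀ c, HasDerivAt H (4 * Real.exp (γ * c) * (u c * u' c)) c := by
      intro c
      have h1 := (hdu' c).pow 2
      have h2 := ((hdu c).pow 2).const_mul k2
      have := h1.add h2
      refine this.congr_deriv ?_
      have hV0 : V₀ = -k2 := by simp [k2]
      rw [hV0]; ring
    set φ : ℝ → ℝ := fun c => (2 * m / γ) * Real.exp (γ * c) with hφdef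
    have hφnn : ∀ c, 0 ≤ φ c := by
      intro c; have := Real.exp_pos (γ * c); have : (0:ℝ) < 2 * m / γ := by positivity
      positivity
    have hdφ : ∀ c, HasDerivAt φ (2 * m * Real.exp (γ * c)) c := by
      intro c
      have h1 : HasDerivAt (fun x : ℝ => γ * x) γ c := by
        simpa using (hasDerivAt_id c).const_mul γ
      have h2 := (Real.hasDerivAt_exp (γ * c)).comp c h1
      have h3 := h2.const_mul (2 * m / γ)
      refine h3.congr_deriv ?_
      rw [mul_comm (Real.exp _) γ, ← mul_assoc, div_mul_cancel₀ _ hγ.ne']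
    have hHeq : ∀ c, H c = u' c ^ 2 + k2 * u c ^ 2 := fun _ => rfl
    -- derivative bounds (without the exp factor)
    have habs : ∀ c, 4 * (u c * u' c) ≤ 2 * m * H c ∧ -(2 * m * H c) ≤ 4 * (u c * u' c) := by
      intro c
      constructor
      · nlinarith [hHeq c, sq_nonneg (u c - u' c),
          mul_nonneg (sub_nonneg.mpr hm1) (sq_nonneg (u' c)),
          mul_nonneg (sub_nonneg.mpr hmk2) (sq_nonneg (u c))]
      · nlinarith [hHeq c, sq_nonneg (u c + u' c),
          mul_nonneg (sub_nonneg.mpr hm1) (sq_nonneg (u' c)),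
          mul_nonneg (sub_nonneg.mpr hmk2) (sq_nonneg (u c))]
    -- monotone P, antitone N
    have hdP : ∀ c, HasDerivAt (fun c => H c * Real.exp (φ c))
        (4 * Real.exp (γ * c) * (u c * u' c) * Real.exp (φ c)
          + H c * (Real.exp (φ c) * (2 * m * Real.exp (γ * c)))) c := by
      intro c
      exact (hdH c).mul ((Real.hasDerivAt_exp (φ c)).comp c (hdφ c))
    have hPmono : Monotone (fun c => H c * Real.exp (φ c)) := by
      refine monotone_of_deriv_nonneg (fun c => (hdP c).differentiableAt) (fun c => ?_)
      rw [(hdP c).deriv]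
      have h1 := mul_le_mul_of_nonneg_left (habs c).2 (Real.exp_pos (γ * c)).le
      have h2 := mul_nonneg (Real.exp_pos (φ c)).le
        (mul_nonneg (Real.exp_pos (γ * c)).le (sub_nonneg.mpr ((habs c).2)))
      nlinarith [h2]
    have hdN : ∀ c, HasDerivAt (fun c => H c * Real.exp (-φ c))
        (4 * Real.exp (γ * c) * (u c * u' c) * Real.exp (-φ c)
          + H c * (Real.exp (-φ c) * -(2 * m * Real.exp (γ * c)))) c := by
      intro c
      exact (hdH c).mul ((Real.hasDerivAt_exp _).comp c (hdφ c).neg)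
    have hNanti : Antitone (fun c => H c * Real.exp (-φ c)) := by
      refine antitone_of_deriv_nonpos (fun c => (hdN c).differentiableAt) (fun c => ?_)
      rw [(hdN c).deriv]
      have h2 := mul_nonneg (Real.exp_pos (-φ c)).le
        (mul_nonneg (Real.exp_pos (γ * c)).le (sub_nonneg.mpr ((habs c).1)))
      nlinarith [h2]
    set δ : ℝ := H c₁ * Real.exp (-φ c₁) with hδdef
    set B : ℝ := H c₁ * Real.exp (φ c₁) with hBdef
    have hHc₁ : 0 < H c₁ := by
      have h1 : 0 < u c₁ ^ 2 :=
        lt_of_le_of_ne (sq_nonneg (u c₁)) (Ne.symm (pow_ne_zero 2 hc₁))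
      nlinarith [sq_nonneg (u' c₁), hHeq c₁]
    have hδpos : 0 < δ := by positivity
    have hHlb : ∀ c ≤ c₁, δ ≤ H c := by
      intro c hc
      have h1 := hNanti hc
      have h2 : Real.exp (-φ c) ≤ 1 := Real.exp_le_one_iff.mpr (by linarith [hφnn c])
      calc δ ≤ H c * Real.exp (-φ c) := h1
        _ ≤ H c * 1 := by nlinarith [hHnn c, Real.exp_pos (-φ c)]
        _ = H c := mul_one _
    have hHub : ∀ c ≤ c₁, H c ≤ B := by
      intro c hc
      have h1 := hPmono hc
      have h2 : (1:ℝ) ≤ Real.exp (φ c) := Real.one_le_exp (hφnn c)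
      calc H c = H c * 1 := (mul_one _).symm
        _ ≤ H c * Real.exp (φ c) := by nlinarith [hHnn c]
        _ ≤ B := h1
    -- endpoint bound
    have huu' : ∀ c ≤ c₁, -(m * B / 2) ≤ u c * u' c ∧ u c * u' c ≤ m * B / 2 := by
      intro c hc
      have h1 := hHub c hc
      have h2 := (habs c).1
      have h3 := (habs c).2
      have hm0 : (0:ℝ) ≤ 2 * m := by linarith
      have h4 := mul_le_mul_of_nonneg_left h1 hm0
      constructor
      · nlinarith
      · nlinarith
    set I : ℝ := ∫ c, u c ^ 2 with hIdef
    have hInn : 0 ≤ I := integral_nonneg (fun c => sq_nonneg _)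
    -- main estimate for a ≤ c₁
    have main : ∀ a ≤ c₁, δ * (c₁ - a) ≤ m * B + 2 * k2 * I := by
      intro a ha
      have hInt1 : IntervalIntegrable (fun x => u' x * u' x + u x * ((V₀ + 2 * Real.exp (γ * x)) * u x)) volume a c₁ := by
        apply Continuous.intervalIntegrable; fun_prop
      have hftc : ∫ x in a..c₁, (u' x * u' x + u x * ((V₀ + 2 * Real.exp (γ * x)) * u x))
          = u c₁ * u' c₁ - u a * u' a := by
        refine intervalIntegral.integral_eq_sub_of_hasDerivAt
          (f := fun x => u x * u' x) (fun x _ => ?_) hInt1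
        exact (hdu x).mul (hdu' x)
      have hInt2 : IntervalIntegrable (fun x => u' x * u' x) volume a c₁ := by
        apply Continuous.intervalIntegrable; fun_prop
      have hInt3 : IntervalIntegrable (fun x => u x * ((V₀ + 2 * Real.exp (γ * x)) * u x)) volume a c₁ := by
        apply Continuous.intervalIntegrable; fun_prop
      have hInt4 : IntervalIntegrable (fun x => u x ^ 2) volume a c₁ := by
        apply Continuous.intervalIntegrable; fun_prop
      have hInt5 : IntervalIntegrable (fun x => H x) volume a c₁ := by
        apply Continuous.intervalIntegrable; fun_prop
      have hsplit : (∫ x in a..c₁, (u' x * u' x + u x * ((V₀ + 2 * Real.exp (γ * x)) * u x)))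
          = (∫ x in a..c₁, u' x * u' x) + ∫ x in a..c₁, u x * ((V₀ + 2 * Real.exp (γ * x)) * u x) :=
        intervalIntegral.integral_add hInt2 hInt3
      have hlow : ∫ x in a..c₁, (V₀ * u x ^ 2) ≤ ∫ x in a..c₁, u x * ((V₀ + 2 * Real.exp (γ * x)) * u x) := by
        refine intervalIntegral.integral_mono_on ha ?_ hInt3 ?_
        · apply Continuous.intervalIntegrable; fun_prop
        · intro x _
          have := Real.exp_pos (γ * x)
          nlinarith [sq_nonneg (u x)]
      have hVconst : ∫ x in a..c₁, (V₀ * u x ^ 2) = V₀ * ∫ x in a..c₁, u x ^ 2 := by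
        simp [intervalIntegral.integral_const_mul]
      have hu2I : ∫ x in a..c₁, u x ^ 2 ≤ I := by
        rw [intervalIntegral.integral_of_le ha]
        exact setIntegral_le_integral hL2 (Filter.Eventually.of_forall (fun x => sq_nonneg _))
      have hu2nn : 0 ≤ ∫ x in a..c₁, u x ^ 2 := by
        rw [intervalIntegral.integral_of_le ha]
        exact integral_nonneg (fun x => sq_nonneg _)
      have hW : u c₁ * u' c₁ - u a * u' a ≤ m * B := by
        have h1 := huu' c₁ le_rfl
        have h2 := huu' a ha
        linarith [h1.1, h1.2, h2.1, h2.2]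
      have hup : ∫ x in a..c₁, u' x * u' x ≤ m * B + k2 * I := by
        have h1 : (∫ x in a..c₁, u' x * u' x)
            = (u c₁ * u' c₁ - u a * u' a) - ∫ x in a..c₁, u x * ((V₀ + 2 * Real.exp (γ * x)) * u x) := by
          rw [← hftc, hsplit]; ring
        rw [h1]
        have h2 : -(k2 * I) ≤ ∫ x in a..c₁, u x * ((V₀ + 2 * Real.exp (γ * x)) * u x) := by
          refine le_trans ?_ hlow
          rw [hVconst]
          have hV0 : V₀ = -k2 := by simp [k2]
          rw [hV0]
          have : k2 * (∫ x in a..c₁, u x ^ 2) ≤ k2 * I := by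
            exact mul_le_mul_of_nonneg_left hu2I (le_of_lt hk2)
          linarith
        linarith
      have hInt6 : IntervalIntegrable (fun x => k2 * u x ^ 2) volume a c₁ := by
        apply Continuous.intervalIntegrable; fun_prop
      have hHint : ∫ x in a..c₁, H x ≤ m * B + 2 * k2 * I := by
        have h0 : (∫ x in a..c₁, H x)
            = ∫ x in a..c₁, (u' x * u' x + k2 * u x ^ 2) := by
          refine intervalIntegral.integral_congr (fun x _ => ?_)
          show u' x ^ 2 + k2 * u x ^ 2 = _
          ring
        have h1 : (∫ x in a..c₁, H x)
            = (∫ x in a..c₁, u' x * u' x) + k2 * ∫ x in a..c₁, u x ^ 2 := by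
          rw [h0, intervalIntegral.integral_add hInt2 hInt6,
            intervalIntegral.integral_const_mul]
        rw [h1]
        have : k2 * (∫ x in a..c₁, u x ^ 2) ≤ k2 * I :=
          mul_le_mul_of_nonneg_left hu2I (le_of_lt hk2)
        linarith
      have hδint : δ * (c₁ - a) ≤ ∫ x in a..c₁, H x := by
        have h1 : ∫ x in a..c₁, (δ : ℝ) = (c₁ - a) • δ := intervalIntegral.integral_const δ
        have h2 : ∫ x in a..c₁, (δ : ℝ) ≤ ∫ x in a..c₁, H x := by
          refine intervalIntegral.integral_mono_on ha (by apply Continuous.intervalIntegrable; fun_prop) hInt5 ?_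
          intro x hx
          exact hHlb x hx.2
        rw [h1] at h2
        simpa [smul_eq_mul, mul_comm] using h2
      linarith
    -- contradiction
    have hBpos : 0 < B := mul_pos hHc₁ (Real.exp_pos _)
    have hnum : 0 < m * B + 2 * k2 * I + 1 := by nlinarith [mul_nonneg (le_of_lt hk2) hInn]
    have hq : 0 < (m * B + 2 * k2 * I + 1) / δ := div_pos hnum hδpos
    have ha : c₁ - (m * B + 2 * k2 * I + 1) / δ ≤ c₁ := by linarith
    have h1 := main _ ha
    have h2 : δ * (c₁ - (c₁ - (m * B + 2 * k2 * I + 1) / δ)) = m * B + 2 * k2 * I + 1 := by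
      rw [sub_sub_cancel]
      rw [mul_div_cancel₀ _ (ne_of_gt hδpos)]
    linarith

lemma aux_deriv_comp {f : ℝ → ℂ} (hf : Differentiable ℝ f) (L : ℂ →L[ℝ] ℝ) :
    deriv (fun x => L (f x)) = fun x => L (deriv f x) := by
  funext x
  exact (L.hasFDerivAt.comp_hasDerivAt x (hf x).hasDerivAt).deriv

theorem toy_liouville_hamiltonian_no_L2_eigenfunctions
    (γ : ℝ) (hγ : 0 < γ) (Q : ℝ) (hQ : Q = 2 / γ + γ / 2) (E : ℝ)
    (ψ : ℝ → ℂ) (hreg : ContDiff ℝ 2 ψ)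
    (hode : ∀ c : ℝ,
      -(1 / 2 : ℂ) * deriv (deriv ψ) c
        + (((Q ^ 2 / 2 + Real.exp (γ * c) : ℝ) : ℂ)) * ψ c = (E : ℂ) * ψ c)
    (hL2 : Integrable (fun c : ℝ => ‖ψ c‖ ^ 2)) :
    ∀ c : ℝ, ψ c = 0 := by
  have hψd : Differentiable ℝ ψ := hreg.differentiable (by simp)
  have hψd' : Differentiable ℝ (deriv ψ) := by
    have h2 : ContDiff ℝ ((1 : ℕ) + 1) ψ := by exact_mod_cast hreg
    exact ((contDiff_succ_iff_deriv.mp h2).2.2).differentiable (by simp)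
  have hmain : ∀ c : ℝ, deriv (deriv ψ) c
      = (((Q ^ 2 - 2 * E + 2 * Real.exp (γ * c) : ℝ)) : ℂ) * ψ c := by
    intro c
    have h := hode c
    push_cast
    push_cast at h
    linear_combination (-2 : ℂ) * h
  -- treat real and imaginary parts uniformly
  have key : ∀ L : ℂ →L[ℝ] ℝ, (∀ z : ℂ, |L z| ≤ ‖z‖) → ∀ c : ℝ, L (ψ c) = 0 := by
    intro L hLb
    set u : ℝ → ℝ := fun c => L (ψ c) with hudef
    have hdiffu : Differentiable ℝ u := L.differentiable.comp hψd
    have hderivu : deriv u = fun x => L (deriv ψ x) := aux_deriv_comp hψd L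
    have hdiffu' : Differentiable ℝ (deriv u) := by
      rw [hderivu]; exact L.differentiable.comp hψd'
    have hodeu : ∀ c, deriv (deriv u) c
        = ((Q ^ 2 - 2 * E) + 2 * Real.exp (γ * c)) * u c := by
      intro c
      rw [hderivu, aux_deriv_comp hψd' L]
      show L (deriv (deriv ψ) c) = _
      rw [hmain c]
      have : ((((Q ^ 2 - 2 * E + 2 * Real.exp (γ * c) : ℝ)) : ℂ) * ψ c)
          = (Q ^ 2 - 2 * E + 2 * Real.exp (γ * c) : ℝ) • ψ c := by
        rw [Complex.real_smul]
      rw [this, L.map_smul, smul_eq_mul]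
    have hL2u : Integrable (fun c => u c ^ 2) := by
      refine hL2.mono' ?_ ?_
      · exact ((L.continuous.comp hψd.continuous).pow 2).aestronglyMeasurable
      · refine Filter.Eventually.of_forall (fun c => ?_)
        rw [Real.norm_eq_abs, _root_.abs_pow]
        exact pow_le_pow_left₀ (abs_nonneg _) (hLb (ψ c)) 2
    exact aux_real γ hγ (Q ^ 2 - 2 * E) u hdiffu hdiffu' hodeu hL2u
  intro c
  have hre := key Complex.reCLM (fun z => by
    simpa using Complex.abs_re_le_norm z) c
  have him := key Complex.imCLM (fun z => by
    simpa using Complex.abs_im_le_norm z) c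
  apply Complex.ext
  · simpa using hre
  · simpa using him
end
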